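/- Let J be a finite set of integers all ≥ 3, G_J = ⊕_{j∈J} ℤ/2^j, with connection set S_J = ∪_{j∈J} T_j where T_j = {±(2i+1) : 0 ≤ i < 2^{j-3}} ⊆ ℤ/2^j embedded in the j-th summand. If characters a_J = (a_j)_{j∈J} and b_J = (b_j)_{j∈J} of G_J satisfy ∑_{j∈J} ∑_{t∈T_j} ω_j^{a_j t} = ∑_{j∈J} ∑_{t∈T_j} ω_j^{b_j t} (where ω_j = exp(2πi/2^j)), and not all a_j, b_j are even, then for the largest m ∈ J such that a_m or b_m is odd, both a_m and b_m are odd and ∑_{t∈T_m} ω_m^{a_m t} = ∑_{t∈T_m} ω_m^{b_m t}. -/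

import Mathlib

open Complex

/-- `ω_j = exp(2πi/2^j)`, a primitive `2^j`-th root of unity. -/
noncomputable def omega (j : ℕ) : ℂ := Complex.exp (2 * Real.pi * Complex.I / 2 ^ j)

instance pow2NeZero (j : ℕ) : NeZero (2 ^ j) := ⟨(Nat.two_pow_pos j).ne'⟩

lemma omega_prim (j : ℕ) : IsPrimitiveRoot (omega j) (2 ^ j) := by
  have := Complex.isPrimitiveRoot_exp (2 ^ j) (Nat.two_pow_pos j).ne'
  convert this using 2
  rw [omega]
  push_cast
  ring

lemma omega_pow_self (j : ℕ) : omega j ^ (2 ^ j) = 1 := (omega_prim j).pow_eq_one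

noncomputable def ee (j : ℕ) (x : ZMod (2 ^ j)) : ℂ := omega j ^ x.val

lemma ee_ne_zero (j : ℕ) (x : ZMod (2 ^ j)) : ee j x ≠ 0 :=
  pow_ne_zero _ (Complex.exp_ne_zero _)

lemma ee_zero (j : ℕ) : ee j 0 = 1 := by simp [ee]

lemma ee_add (j : ℕ) (x y : ZMod (2 ^ j)) : ee j (x + y) = ee j x * ee j y := by
  rw [ee, ee, ee, ZMod.val_add, ← pow_eq_pow_mod _ (omega_pow_self j), pow_add]

lemma ee_natCast (j k : ℕ) : ee j (k : ZMod (2 ^ j)) = omega j ^ k := by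
  rw [ee, ZMod.val_natCast, ← pow_eq_pow_mod _ (omega_pow_self j)]

lemma ee_nsmul (j : ℕ) (i : ℕ) (x : ZMod (2 ^ j)) :
    ee j ((i : ZMod (2 ^ j)) * x) = (ee j x) ^ i := by
  induction i with
  | zero => simp [ee_zero]
  | succ n ih =>
      push_cast
      rw [add_mul, one_mul, ee_add, ih, pow_succ]

/-- The connection set `T_j = {±(2i+1) mod 2^j : 0 ≤ i < 2^(j-3)}` in `ℤ/2^j`. -/
def Tset (j : ℕ) : Finset (ZMod (2 ^ j)) :=
  (Finset.range (2 ^ (j - 3))).image (fun i => ((2 * i + 1 : ℕ) : ZMod (2 ^ j))) ∪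
    (Finset.range (2 ^ (j - 3))).image (fun i => -((2 * i + 1 : ℕ) : ZMod (2 ^ j)))

lemma pow_facts {j : ℕ} (hj : 3 ≤ j) :
    2 * 2 ^ (j - 3) = 2 ^ (j - 2) ∧ 2 * 2 ^ (j - 2) = 2 ^ (j - 1) ∧ 2 * 2 ^ (j - 1) = 2 ^ j := by
  refine ⟨?_, ?_, ?_⟩ <;>
  · rw [← pow_succ']
    congr 1
    omega

lemma Tset_eq {j : ℕ} (hj : 3 ≤ j) :
    Tset j = (Finset.range (2 ^ (j - 2))).image
      (fun i => ((2 * i + 1 : ℕ) : ZMod (2 ^ j)) - ((2 ^ (j - 2) : ℕ) : ZMod (2 ^ j))) := by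
  obtain ⟨h1, h2, h3⟩ := pow_facts hj
  ext x
  simp only [Tset, Finset.mem_union, Finset.mem_image, Finset.mem_range]
  constructor
  · rintro (⟨i, hi, rfl⟩ | ⟨i, hi, rfl⟩)
    · refine ⟨i + 2 ^ (j - 3), by omega, ?_⟩
      rw [show 2 * (i + 2 ^ (j - 3)) + 1 = (2 * i + 1) + 2 ^ (j - 2) by omega]
      push_cast
      ring
    · refine ⟨2 ^ (j - 3) - 1 - i, by omega, ?_⟩
      rw [show 2 * (2 ^ (j - 3) - 1 - i) + 1 = 2 ^ (j - 2) - (2 * i + 1) by omega,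
        Nat.cast_sub (by omega)]
      ring
  · rintro ⟨i, hi, rfl⟩
    by_cases h : 2 ^ (j - 3) ≤ i
    · left
      refine ⟨i - 2 ^ (j - 3), by omega, ?_⟩
      rw [show 2 * (i - 2 ^ (j - 3)) + 1 = (2 * i + 1) - 2 ^ (j - 2) by omega,
        Nat.cast_sub (by omega)]
    · right
      refine ⟨2 ^ (j - 3) - 1 - i, by omega, ?_⟩
      rw [show 2 * (2 ^ (j - 3) - 1 - i) + 1 = 2 ^ (j - 2) - (2 * i + 1) by omega,
        Nat.cast_sub (by omega)]
      ring

lemma ee_nsmul' (j : ℕ) (i : ℕ) (x : ZMod (2 ^ j)) :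
    ee j ((i : ZMod (2 ^ j)) * x) = (ee j x) ^ i := ee_nsmul j i x

/-- The character sum `∑_{t ∈ T_j} ω_j^(a·t)` for the character of `ℤ/2^j`
indexed by `a`. -/
noncomputable def charSum (j : ℕ) (a : ZMod (2 ^ j)) : ℂ :=
  ∑ t ∈ Tset j, omega j ^ ((a * t).val)

lemma odd_lt {j : ℕ} (hj : 3 ≤ j) {i : ℕ} (hi : i < 2 ^ (j - 2)) : 2 * i + 1 < 2 ^ j := by
  obtain ⟨h1, h2, h3⟩ := pow_facts hj
  omega

lemma charSum_eq {j : ℕ} (hj : 3 ≤ j) (c : ZMod (2 ^ j)) :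
    charSum j c = ee j (c - c * ((2 ^ (j - 2) : ℕ) : ZMod (2 ^ j))) *
      ∑ i ∈ Finset.range (2 ^ (j - 2)), (ee j (2 * c)) ^ i := by
  have hinj : Set.InjOn
      (fun i => ((2 * i + 1 : ℕ) : ZMod (2 ^ j)) - ((2 ^ (j - 2) : ℕ) : ZMod (2 ^ j)))
      (Finset.range (2 ^ (j - 2))) := by
    intro i hi i' hi' hii
    simp only [Finset.coe_range, Set.mem_Iio] at hi hi'
    have : ((2 * i + 1 : ℕ) : ZMod (2 ^ j)) = ((2 * i' + 1 : ℕ) : ZMod (2 ^ j)) := by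
      rwa [sub_left_inj] at hii
    have hv := congrArg ZMod.val this
    rw [ZMod.val_natCast_of_lt (odd_lt hj hi), ZMod.val_natCast_of_lt (odd_lt hj hi')] at hv
    omega
  rw [charSum, Tset_eq hj, Finset.sum_image hinj, Finset.mul_sum]
  refine Finset.sum_congr rfl fun i hi => ?_
  have : c * (((2 * i + 1 : ℕ) : ZMod (2 ^ j)) - ((2 ^ (j - 2) : ℕ) : ZMod (2 ^ j)))
      = (c - c * ((2 ^ (j - 2) : ℕ) : ZMod (2 ^ j))) + (i : ZMod (2 ^ j)) * (2 * c) := by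
    push_cast
    ring
  rw [show omega j ^ ((c * (((2 * i + 1 : ℕ) : ZMod (2 ^ j)) -
      ((2 ^ (j - 2) : ℕ) : ZMod (2 ^ j)))).val) = ee j (c * _) from rfl, this, ee_add, ee_nsmul]

lemma ee_eq_one_iff (j : ℕ) (x : ZMod (2 ^ j)) : ee j x = 1 ↔ x = 0 := by
  constructor
  · intro h
    rw [ee, (omega_prim j).pow_eq_one_iff_dvd] at h
    have := ZMod.val_lt x
    have hv : x.val = 0 := Nat.eq_zero_of_dvd_of_lt h this
    exact (ZMod.val_eq_zero x).mp hv
  · rintro rfl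
    exact ee_zero j

lemma omega_half {j : ℕ} (hj : 1 ≤ j) : omega j ^ (2 ^ (j - 1)) = -1 := by
  have h3 : 2 ^ (j - 1) + 2 ^ (j - 1) = 2 ^ j := by
    rw [← two_mul, ← pow_succ']
    congr 1
    omega
  have hsq : omega j ^ (2 ^ (j - 1)) * omega j ^ (2 ^ (j - 1)) = 1 := by
    rw [← pow_add, h3, omega_pow_self]
  rcases mul_self_eq_one_iff.mp hsq with h | h
  · exfalso
    have := (omega_prim j).pow_eq_one_iff_dvd _ |>.mp h
    have hlt : 2 ^ (j - 1) < 2 ^ j := Nat.pow_lt_pow_right (by norm_num) (by omega)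
    have := Nat.le_of_dvd (Nat.two_pow_pos _) this
    omega
  · exact h

lemma zpow_key {j : ℕ} (hj : 3 ≤ j) (c : ZMod (2 ^ j)) :
    (ee j (2 * c)) ^ (2 ^ (j - 2)) = ee j (((2 ^ (j - 1) : ℕ) : ZMod (2 ^ j)) * c) := by
  obtain ⟨h1, h2, h3⟩ := pow_facts hj
  rw [← ee_nsmul]
  congr 1
  rw [← h2]
  push_cast
  ring

lemma cast_val_self {j : ℕ} (c : ZMod (2 ^ j)) : ((c.val : ℕ) : ZMod (2 ^ j)) = c := by
  simp [ZMod.natCast_val, ZMod.cast_id]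

lemma charSum_even_rat {j : ℕ} (hj : 3 ≤ j) {c : ZMod (2 ^ j)} (hc : Even c.val) :
    ∃ q : ℚ, charSum j c = (q : ℂ) := by
  obtain ⟨h1, h2, h3⟩ := pow_facts hj
  obtain ⟨r, hr⟩ := hc
  have hcr : c = ((2 * r : ℕ) : ZMod (2 ^ j)) := by
    rw [← cast_val_self c, hr]; congr 1; omega
  have hz1 : (ee j (2 * c)) ^ (2 ^ (j - 2)) = 1 := by
    rw [zpow_key hj c, hcr]
    have : ((2 ^ (j - 1) : ℕ) : ZMod (2 ^ j)) * ((2 * r : ℕ) : ZMod (2 ^ j)) = 0 := by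
      rw [← Nat.cast_mul, show 2 ^ (j - 1) * (2 * r) = 2 ^ j * r by rw [← h3]; ring,
        Nat.cast_mul, ZMod.natCast_self, zero_mul]
    rw [this, ee_zero]
  rw [charSum_eq hj c]
  by_cases hz : ee j (2 * c) = 1
  · -- 2 * c = 0, so c = 0 or c = 2^(j-1)
    have h2c : (2 : ZMod (2 ^ j)) * c = 0 := (ee_eq_one_iff j _).mp hz
    have hval : (2 * c).val = 0 := by rw [h2c]; simp
    rw [ZMod.val_mul] at hval
    have hdvd : 2 ^ j ∣ 2 * c.val := by
      have h2c' : ((2 * c.val : ℕ) : ZMod (2 ^ j)) = 0 := by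
        push_cast
        rw [cast_val_self, h2c]
      exact (ZMod.natCast_eq_zero_iff ..).mp h2c'
    have hclt := ZMod.val_lt c
    have hcv : c.val = 0 ∨ c.val = 2 ^ (j - 1) := by
      obtain ⟨k, hk⟩ := hdvd
      have hk2 : k < 2 := by nlinarith [Nat.two_pow_pos j]
      interval_cases k <;> omega
    simp only [hz, one_pow, Finset.sum_const, Finset.card_range, nsmul_eq_mul, mul_one]
    rcases hcv with hcv | hcv
    · have hc0 : c = 0 := by rwa [ZMod.val_eq_zero] at hcv
      refine ⟨2 ^ (j - 2), ?_⟩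
      rw [hc0]
      simp only [zero_mul, sub_zero, ee_zero, one_mul]
      push_cast
      ring
    · have hc' : c = ((2 ^ (j - 1) : ℕ) : ZMod (2 ^ j)) := by
        rw [← cast_val_self c, hcv]
      have hmul0 : c * ((2 ^ (j - 2) : ℕ) : ZMod (2 ^ j)) = 0 := by
        rw [hc', ← Nat.cast_mul, ← pow_add, show (j - 1) + (j - 2) = j + (j - 3) by omega,
          pow_add, Nat.cast_mul, ZMod.natCast_self, zero_mul]
      refine ⟨-(2 ^ (j - 2)), ?_⟩
      rw [hmul0, sub_zero, hc', ee_natCast, omega_half (by omega)]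
      push_cast
      ring
  · rw [geom_sum_eq hz, hz1]
    exact ⟨0, by simp⟩

lemma charSum_odd_ne {j : ℕ} (hj : 3 ≤ j) {c : ZMod (2 ^ j)} (hc : Odd c.val) :
    charSum j c ≠ 0 := by
  obtain ⟨h1, h2, h3⟩ := pow_facts hj
  obtain ⟨r, hr⟩ := hc
  have hzm : (ee j (2 * c)) ^ (2 ^ (j - 2)) = -1 := by
    rw [zpow_key hj c]
    have : ((2 ^ (j - 1) : ℕ) : ZMod (2 ^ j)) * c = ((2 ^ (j - 1) : ℕ) : ZMod (2 ^ j)) := by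
      conv_lhs => rw [← cast_val_self c, hr]
      rw [← Nat.cast_mul, show 2 ^ (j - 1) * (2 * r + 1) = 2 ^ j * r + 2 ^ (j - 1) by
          rw [Nat.mul_add, Nat.mul_one, ← h3]; ring,
        Nat.cast_add, Nat.cast_mul, ZMod.natCast_self, zero_mul, zero_add]
    rw [this, ee_natCast]
    exact omega_half (by omega)
  have hz : ee j (2 * c) ≠ 1 := by
    intro h
    rw [h, one_pow] at hzm
    norm_num at hzm
  rw [charSum_eq hj c, geom_sum_eq hz, hzm]
  apply mul_ne_zero (ee_ne_zero _ _)
  apply div_ne_zero (by norm_num)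
  exact sub_ne_zero_of_ne hz

lemma two_pow_even {k : ℕ} (hk : 1 ≤ k) : Even (2 ^ k) := by
  have h : 2 * 2 ^ (k - 1) = 2 ^ k := by
    rw [← pow_succ']
    congr 1
    omega
  exact ⟨2 ^ (k - 1), by omega⟩

lemma tset_val_odd {j : ℕ} (hj : 3 ≤ j) {t : ZMod (2 ^ j)} (ht : t ∈ Tset j) : Odd t.val := by
  obtain ⟨h1, h2, h3⟩ := pow_facts hj
  simp only [Tset, Finset.mem_union, Finset.mem_image, Finset.mem_range] at ht
  rcases ht with ⟨i, hi, rfl⟩ | ⟨i, hi, rfl⟩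
  · rw [ZMod.val_natCast_of_lt (by omega)]
    exact ⟨i, by omega⟩
  · have hlt : 2 * i + 1 < 2 ^ j := by omega
    have hv : ((2 * i + 1 : ℕ) : ZMod (2 ^ j)).val = 2 * i + 1 := ZMod.val_natCast_of_lt hlt
    have hne : ((2 * i + 1 : ℕ) : ZMod (2 ^ j)) ≠ 0 := by
      intro h
      rw [h] at hv
      simp at hv
    rw [ZMod.neg_val, if_neg hne, hv]
    rw [Nat.odd_iff]
    omega

lemma mul_val_odd {j : ℕ} (hj : 3 ≤ j) {c t : ZMod (2 ^ j)} (hc : Odd c.val)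
    (ht : t ∈ Tset j) : Odd ((c * t).val) := by
  have hto := tset_val_odd hj ht
  rw [Nat.odd_iff] at hc hto ⊢
  rw [ZMod.val_mul, Nat.mod_mod_of_dvd _ (dvd_pow_self 2 (by omega)), Nat.mul_mod, hc, hto]

lemma omega_pow_eq {j m : ℕ} (hjm : j ≤ m) : omega m ^ (2 ^ (m - j)) = omega j := by
  rw [omega, omega, ← Complex.exp_nat_mul]
  congr 1
  have h2 : ((2 : ℂ) ^ (m - j)) * 2 ^ j = 2 ^ m := by
    rw [← pow_add]
    congr 1
    omega
  have hj0 : (2 : ℂ) ^ j ≠ 0 := pow_ne_zero _ two_ne_zero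
  have hm0 : (2 : ℂ) ^ m ≠ 0 := pow_ne_zero _ two_ne_zero
  push_cast
  field_simp
  rw [← h2]

noncomputable def Bv (m : ℕ) : Fin (2 ^ (m - 1)) → ℂ := fun k => omega m ^ (k : ℕ)

lemma Bv_linearIndependent (m : ℕ) (hm : 1 ≤ m) : LinearIndependent ℚ (Bv m) := by
  have hirr := Polynomial.cyclotomic.irreducible_rat (n := 2 ^ m) (Nat.two_pow_pos m)
  haveI : NeZero ((2 ^ m : ℕ) : ℚ) := ⟨Nat.cast_ne_zero.mpr (Nat.two_pow_pos m).ne'⟩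
  have hmin := (omega_prim m).minpoly_eq_cyclotomic_of_irreducible hirr
  have hdeg : (minpoly ℚ (omega m)).natDegree = 2 ^ (m - 1) := by
    rw [← hmin, Polynomial.natDegree_cyclotomic,
      Nat.totient_prime_pow Nat.prime_two (by omega)]
    norm_num
  have li := linearIndependent_pow (K := ℚ) (omega m)
  rw [hdeg] at li
  exact li

lemma pow_mem_span (m : ℕ) (hm : 3 ≤ m) (s : ℕ) :
    (Even s → omega m ^ s ∈ Submodule.span ℚ (Bv m '' {k | Even (k : ℕ)})) ∧
    (Odd s → omega m ^ s ∈ Submodule.span ℚ (Bv m '' {k | Odd (k : ℕ)})) := by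
  induction s using Nat.strong_induction_on with
  | _ s ih =>
    obtain ⟨h1, h2, h3⟩ := pow_facts hm
    by_cases hs : s < 2 ^ (m - 1)
    · exact ⟨fun he => Submodule.subset_span ⟨⟨s, hs⟩, he, rfl⟩,
        fun ho => Submodule.subset_span ⟨⟨s, hs⟩, ho, rfl⟩⟩
    · by_cases hs2 : s < 2 ^ m
      · have hpos : 0 < 2 ^ (m - 1) := Nat.two_pow_pos _
        have hss : s - 2 ^ (m - 1) < s := by omega
        have key : omega m ^ s = -(omega m ^ (s - 2 ^ (m - 1))) := by
          conv_lhs => rw [show s = 2 ^ (m - 1) + (s - 2 ^ (m - 1)) by omega]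
          rw [pow_add, omega_half (by omega)]
          ring
        have hev : Even (2 ^ (m - 1)) := two_pow_even (by omega)
        constructor
        · intro he
          rw [key]
          refine neg_mem ((ih _ hss).1 ?_)
          rw [Nat.even_sub (by omega)]
          simp [he, hev]
        · intro ho
          rw [key]
          exact neg_mem ((ih _ hss).2 (Nat.Odd.sub_even (by omega) ho hev))
      · have hmod : omega m ^ s = omega m ^ (s % 2 ^ m) :=
          pow_eq_pow_mod _ (omega_pow_self m)
        have hpos : 0 < 2 ^ m := Nat.two_pow_pos m
        have hlt : s % 2 ^ m < s := by
          have := Nat.mod_lt s hpos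
          omega
        have hpar : s % 2 ^ m % 2 = s % 2 := Nat.mod_mod_of_dvd _ (dvd_pow_self 2 (by omega))
        constructor
        · intro he
          rw [hmod]
          refine (ih _ hlt).1 ?_
          rw [Nat.even_iff] at he ⊢
          omega
        · intro ho
          rw [hmod]
          refine (ih _ hlt).2 ?_
          rw [Nat.odd_iff] at ho ⊢
          omega

lemma charSum_mem_E_of_lt {j m : ℕ} (hj : 3 ≤ j) (hjm : j < m) (c : ZMod (2 ^ j)) :
    charSum j c ∈ Submodule.span ℚ (Bv m '' {k | Even (k : ℕ)}) := by
  rw [charSum]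
  refine Submodule.sum_mem _ fun t ht => ?_
  rw [← omega_pow_eq (le_of_lt hjm), ← pow_mul]
  exact (pow_mem_span m (by omega) _).1 (Even.mul_right (two_pow_even (by omega)) _)

lemma ratCast_mem_E {m : ℕ} (hm : 3 ≤ m) (q : ℚ) :
    (q : ℂ) ∈ Submodule.span ℚ (Bv m '' {k | Even (k : ℕ)}) := by
  have h1 : (1 : ℂ) ∈ Submodule.span ℚ (Bv m '' {k | Even (k : ℕ)}) := by
    have := (pow_mem_span m hm 0).1 Even.zero
    simpa using this
  have := Submodule.smul_mem _ q h1
  simpa [Rat.smul_def] using this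

lemma charSum_odd_mem_O {m : ℕ} (hm : 3 ≤ m) {c : ZMod (2 ^ m)} (hc : Odd c.val) :
    charSum m c ∈ Submodule.span ℚ (Bv m '' {k | Odd (k : ℕ)}) := by
  rw [charSum]
  refine Submodule.sum_mem _ fun t ht => ?_
  exact (pow_mem_span m hm _).2 (mul_val_odd hm hc ht)

lemma charSum_even_mem_E {j m : ℕ} (hj : 3 ≤ j) (hm : 3 ≤ m) {c : ZMod (2 ^ j)}
    (hc : Even c.val) :
    charSum j c ∈ Submodule.span ℚ (Bv m '' {k | Even (k : ℕ)}) := by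
  obtain ⟨q, hq⟩ := charSum_even_rat hj hc
  rw [hq]
  exact ratCast_mem_E hm q

/-- If two characters `a_J`, `b_J` of `G_J = ⊕_{j∈J} ℤ/2^j` give the same value on the
connection set `S_J = ∪_j T_j`, and not all components are even, then for the largest
`m ∈ J` with `a_m` or `b_m` odd, both `a_m` and `b_m` are odd and the `m`-th character
sums agree. -/
theorem stmt_7 (J : Finset ℕ) (hJ : ∀ j ∈ J, 3 ≤ j)
    (a b : (j : ℕ) → ZMod (2 ^ j))
    (hsum : ∑ j ∈ J, charSum j (a j) = ∑ j ∈ J, charSum j (b j))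
    (m : ℕ) (hmJ : m ∈ J)
    (hmodd : Odd (a m).val ∨ Odd (b m).val)
    (hmax : ∀ j ∈ J, (Odd (a j).val ∨ Odd (b j).val) → j ≤ m) :
    Odd (a m).val ∧ Odd (b m).val ∧ charSum m (a m) = charSum m (b m) := by
  have hm3 : 3 ≤ m := hJ m hmJ
  set E := Submodule.span ℚ (Bv m '' {k | Even (k : ℕ)}) with hE
  set O := Submodule.span ℚ (Bv m '' {k | Odd (k : ℕ)}) with hO
  have hdisj : Disjoint E O := by
    refine (Bv_linearIndependent m (by omega)).disjoint_span_image ?_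
    rw [Set.disjoint_left]
    intro k hk hk'
    exact (Nat.not_odd_iff_even.mpr hk) hk'
  have hmemE : ∀ j ∈ J.erase m, charSum j (a j) ∈ E ∧ charSum j (b j) ∈ E := by
    intro j hj
    have hjJ := Finset.mem_of_mem_erase hj
    have hjne := Finset.ne_of_mem_erase hj
    have hj3 := hJ j hjJ
    rcases lt_or_gt_of_ne hjne with hlt | hgt
    · exact ⟨charSum_mem_E_of_lt hj3 hlt _, charSum_mem_E_of_lt hj3 hlt _⟩
    · have hnotodd : ¬(Odd ((a j).val) ∨ Odd ((b j).val)) := by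
        intro h
        exact absurd (hmax j hjJ h) (by omega)
      push_neg at hnotodd
      obtain ⟨ha, hb⟩ := hnotodd
      rw [Nat.not_odd_iff_even] at ha hb
      exact ⟨charSum_even_mem_E hj3 hm3 ha, charSum_even_mem_E hj3 hm3 hb⟩
  have hsplit : charSum m (a m) + ∑ j ∈ J.erase m, charSum j (a j)
      = charSum m (b m) + ∑ j ∈ J.erase m, charSum j (b j) := by
    rw [Finset.add_sum_erase J (fun j => charSum j (a j)) hmJ,
      Finset.add_sum_erase J (fun j => charSum j (b j)) hmJ]
    exact hsum
  have hresE : charSum m (a m) - charSum m (b m) ∈ E := by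
    have hres : charSum m (a m) - charSum m (b m)
        = ∑ j ∈ J.erase m, charSum j (b j) - ∑ j ∈ J.erase m, charSum j (a j) := by
      linear_combination hsplit
    rw [hres]
    exact sub_mem (Submodule.sum_mem _ fun j hj => (hmemE j hj).2)
      (Submodule.sum_mem _ fun j hj => (hmemE j hj).1)
  rcases Nat.even_or_odd (a m).val with haE | haO <;>
    rcases Nat.even_or_odd (b m).val with hbE | hbO
  · rcases hmodd with h | h
    · exact absurd h (Nat.not_odd_iff_even.mpr haE)
    · exact absurd h (Nat.not_odd_iff_even.mpr hbE)
  · exfalso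
    have hSb : charSum m (b m) ∈ O := charSum_odd_mem_O hm3 hbO
    have hSbE : charSum m (b m) ∈ E := by
      have h1 : charSum m (a m) ∈ E := charSum_even_mem_E hm3 hm3 haE
      have h2 := sub_mem h1 hresE
      simpa using h2
    exact charSum_odd_ne hm3 hbO (Submodule.disjoint_def.mp hdisj _ hSbE hSb)
  · exfalso
    have hSa : charSum m (a m) ∈ O := charSum_odd_mem_O hm3 haO
    have hSaE : charSum m (a m) ∈ E := by
      have h1 : charSum m (b m) ∈ E := charSum_even_mem_E hm3 hm3 hbE
      have h2 := add_mem hresE h1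
      simpa using h2
    exact charSum_odd_ne hm3 haO (Submodule.disjoint_def.mp hdisj _ hSaE hSa)
  · refine ⟨haO, hbO, ?_⟩
    have hsubO : charSum m (a m) - charSum m (b m) ∈ O :=
      sub_mem (charSum_odd_mem_O hm3 haO) (charSum_odd_mem_O hm3 hbO)
    exact sub_eq_zero.mp (Submodule.disjoint_def.mp hdisj _ hresE hsubO)
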